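/- Given σ > 0, a d×d real symmetric positive definite matrix Σ₀, and vectors A₁,…,Aₙ ∈ ℝ^d, define V_t = Σ_{ℓ=1}^{t−1} A_ℓ A_ℓᵀ and Σ_t = (Σ₀⁻¹ + σ⁻² V_t)⁻¹ for t = 1,…,n+1. Then det(Σ_{n+1}⁻¹) = det(Σ₀⁻¹) · Π_{t=1}^n (1 + σ⁻² ‖A_t‖²_{Σ_t}). -/

import Mathlib

open Finset Matrix

lemma aux_smul_posSemidef {m : Type*} [Fintype m] {M : Matrix m m ℝ}
    (hM : M.PosSemidef) {c : ℝ} (hc : 0 ≤ c) : (c • M).PosSemidef := by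
  refine ⟨?_, fun x => ?_⟩
  · unfold Matrix.IsHermitian
    rw [conjTranspose_smul, hM.1.eq]
    simp
  · exact (hM.smul hc).2 x

lemma aux_vecMulVec_posSemidef {m : Type*} [Fintype m] [DecidableEq m] (u : m → ℝ) :
    (Matrix.vecMulVec u u).PosSemidef := by
  rw [Matrix.vecMulVec_eq (Fin 1)]
  have := Matrix.posSemidef_self_mul_conjTranspose (Matrix.replicateCol (Fin 1) u)
  simp at this
  convert this <;> rfl

lemma aux_smul_vecMulVec {m : Type*} (c : ℝ) (u : m → ℝ) :
    c • Matrix.vecMulVec u u = Matrix.vecMulVec (c • u) u := by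
  ext i j
  simp [Matrix.vecMulVec_apply, mul_assoc]

lemma aux_det_one_add {ι : Type*} [DecidableEq ι] [Fintype ι] [Unique ι] {d : ℕ}
    (M : Matrix (Fin d) (Fin d) ℝ) (u v : Fin d → ℝ) :
    (1 + Matrix.replicateRow ι v * M * Matrix.replicateCol ι u).det = 1 + v ⬝ᵥ M.mulVec u := by
  rw [Matrix.det_unique]
  simp only [Matrix.add_apply, Matrix.one_apply_eq, Matrix.mul_apply, Matrix.replicateRow_apply,
    Matrix.replicateCol_apply, dotProduct, mulVec, Finset.mul_sum, Finset.sum_mul]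
  congr 1
  rw [Finset.sum_comm]
  exact Finset.sum_congr rfl fun i _ => Finset.sum_congr rfl fun j _ => by ring

/-- Given `σ > 0`, a positive definite `Σ₀`, and vectors `A₁,…,Aₙ ∈ ℝ^d`, let
`V_t = Σ_{ℓ=1}^{t−1} A_ℓ A_ℓᵀ` and `Σ_t = (Σ₀⁻¹ + σ⁻² V_t)⁻¹`. Then
`det(Σ_{n+1}⁻¹) = det(Σ₀⁻¹) · Π_{t=1}^n (1 + σ⁻² ‖A_t‖²_{Σ_t})`. -/
theorem det_posterior_precision_eq {d n : ℕ} (σ : ℝ) (hσ : 0 < σ)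
    (S0 : Matrix (Fin d) (Fin d) ℝ) (hS0 : S0.PosDef)
    (A : ℕ → Fin d → ℝ)
    (V : ℕ → Matrix (Fin d) (Fin d) ℝ)
    (hV : ∀ t, V t = ∑ ℓ ∈ Finset.Ico 1 t, Matrix.vecMulVec (A ℓ) (A ℓ))
    (Sig : ℕ → Matrix (Fin d) (Fin d) ℝ)
    (hSig : ∀ t, Sig t = (S0⁻¹ + (σ ^ 2)⁻¹ • V t)⁻¹) :
    (Sig (n + 1))⁻¹.det =
      (S0⁻¹).det * ∏ t ∈ Finset.Icc 1 n, (1 + (σ ^ 2)⁻¹ * (A t ⬝ᵥ (Sig t).mulVec (A t))) := by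
  set c : ℝ := (σ ^ 2)⁻¹ with hc
  have hc0 : 0 ≤ c := by positivity
  -- V t is positive semidefinite
  have hVps : ∀ t, (V t).PosSemidef := by
    intro t
    rw [hV t]
    refine Finset.sum_induction _ _ (fun a b ha hb => ha.add hb) ?_ ?_
    · exact Matrix.PosSemidef.zero
    · intro ℓ _
      exact aux_vecMulVec_posSemidef (A ℓ)
  -- the precision matrices are positive definite
  have hP : ∀ t, (S0⁻¹ + c • V t).PosDef := fun t =>
    hS0.inv.add_posSemidef (aux_smul_posSemidef (hVps t) hc0)
  have hPu : ∀ t, IsUnit (S0⁻¹ + c • V t).det := fun t =>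
    isUnit_iff_ne_zero.mpr (ne_of_gt (hP t).det_pos)
  -- (Sig t)⁻¹ equals the precision matrix
  have hSinv : ∀ t, (Sig t)⁻¹ = S0⁻¹ + c • V t := by
    intro t
    rw [hSig t, Matrix.nonsing_inv_nonsing_inv _ (hPu t)]
  rw [hSinv]
  -- main induction
  induction n with
  | zero =>
    rw [hV 1]
    simp
  | succ m ih =>
    have hVsucc : V (m + 2) = V (m + 1) + Matrix.vecMulVec (A (m + 1)) (A (m + 1)) := by
      rw [hV, hV, Finset.sum_Ico_succ_top (by omega : 1 ≤ m + 1)]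
    have hprod : Finset.Icc 1 (m + 1) = insert (m + 1) (Finset.Icc 1 m) := by
      ext x
      simp only [Finset.mem_Icc, Finset.mem_insert]
      omega
    rw [hprod, Finset.prod_insert (by simp), hVsucc, smul_add, aux_smul_vecMulVec,
      Matrix.vecMulVec_eq (Fin 1), ← add_assoc,
      Matrix.det_add_replicateCol_mul_replicateRow (hPu (m + 1)), ih, ← hSinv (m + 1), hSig (m + 1),
      Matrix.nonsing_inv_nonsing_inv _ (hPu (m + 1)), ← hSig (m + 1)]
    rw [@aux_det_one_add (Fin 1) (fun a b => decidableEq_of_subsingleton a b) Unique.fintype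
      Fin.instUnique d (Sig (m + 1)) (c • A (m + 1)) (A (m + 1)),
      Matrix.mulVec_smul, dotProduct_smul, smul_eq_mul]
    ring
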